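/- Let g : ℝⁿ → [0,∞) be p-concave and 1/p-homogeneous for some p > 0, and let u ∈ ℝⁿ be in the support of g. Then for all w ∈ ℝⁿ and all t₁ ≥ t₂ ≥ 0, g(w + t₁ u) ≥ g(w + t₂ u). That is, g is nondecreasing along rays in directions from its support. -/
import Mathlib


/-- A `p`-concave, `1/p`-homogeneous `g : ℝⁿ → [0,∞)` is nondecreasing along rays in
directions from its support. -/
theorem monotone_along_support_rays {n : ℕ} (p : ℝ) (hp : 0 < p)
    (g : EuclideanSpace ℝ (Fin n) → ℝ) (hg0 : ∀ x, 0 ≤ g x)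
    (hconc : ∀ x y, 0 < g x → 0 < g y → ∀ l : ℝ, 0 ≤ l → l ≤ 1 →
      (l * g x ^ p + (1 - l) * g y ^ p) ^ (1 / p) ≤ g (l • x + (1 - l) • y))
    (hhom : ∀ a : ℝ, 0 < a → ∀ x, g (a • x) = a ^ (1 / p) * g x)
    (u : EuclideanSpace ℝ (Fin n)) (hu : 0 < g u) :
    ∀ w : EuclideanSpace ℝ (Fin n), ∀ t₁ t₂ : ℝ, 0 ≤ t₂ → t₂ ≤ t₁ →
      g (w + t₂ • u) ≤ g (w + t₁ • u) := by
  intro w t₁ t₂ ht₂ ht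
  set v := w + t₂ • u with hv
  set s := t₁ - t₂ with hsdef
  have hs0 : 0 ≤ s := by simp only [hsdef]; linarith
  have hinvp : 1 / p * p = 1 := by field_simp
  rcases eq_or_lt_of_le hs0 with hs | hs
  · have : t₁ = t₂ := by rw [hsdef] at hs; linarith [hs.symm]
    simp [this, hv]
  rcases le_or_gt (g v) 0 with hgv | hgv
  · have : g v = 0 := le_antisymm hgv (hg0 v)
    rw [this]; exact hg0 _
  · have h2s : (0:ℝ) < 2 * s := by linarith
    have hx : 0 < g ((2*s) • u) := by
      rw [hhom _ h2s]
      exact mul_pos (Real.rpow_pos_of_pos h2s _) hu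
    have hy : 0 < g ((2:ℝ) • v) := by
      rw [hhom _ (by norm_num)]
      exact mul_pos (Real.rpow_pos_of_pos (by norm_num) _) hgv
    have key := hconc _ _ hx hy (1/2) (by norm_num) (by norm_num)
    have hpt : (1/2 : ℝ) • ((2*s) • u) + (1 - 1/2 : ℝ) • ((2:ℝ) • v) = w + t₁ • u := by
      rw [hv, hsdef]; module
    rw [hpt] at key
    have hgxp : g ((2*s) • u) ^ p = (2*s) * g u ^ p := by
      rw [hhom _ h2s, Real.mul_rpow (Real.rpow_nonneg h2s.le _) (hg0 u),
        ← Real.rpow_mul h2s.le, hinvp, Real.rpow_one]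
    have hgyp : g ((2:ℝ) • v) ^ p = 2 * g v ^ p := by
      rw [hhom _ (by norm_num : (0:ℝ) < 2),
        Real.mul_rpow (Real.rpow_nonneg (by norm_num) _) (hg0 v),
        ← Real.rpow_mul (by norm_num), hinvp, Real.rpow_one]
    rw [hgxp, hgyp] at key
    have heq : (1/2 : ℝ) * (2*s * g u ^ p) + (1 - 1/2) * (2 * g v ^ p)
        = s * g u ^ p + g v ^ p := by ring
    rw [heq] at key
    refine le_trans ?_ key
    have hvp : g v = (g v ^ p) ^ (1/p) := by
      rw [← Real.rpow_mul (hg0 v), mul_one_div, div_self hp.ne', Real.rpow_one]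
    calc g v = (g v ^ p) ^ (1/p) := hvp
      _ ≤ (s * g u ^ p + g v ^ p) ^ (1/p) := by
          apply Real.rpow_le_rpow (Real.rpow_nonneg (hg0 v) _)
          · nlinarith [Real.rpow_pos_of_pos hu p]
          · positivity
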